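/- Let X be a proper geodesic metric space, let D > 0, and let Y ⊆ X be a nonempty closed D-contracting subset. Then: (1) for every subset Z ⊆ X one has diam(Π_Y(Z)) ≤ diam(Z) + 4D (as an inequality in [0,∞]); (2) if p is a projection of a point x onto Y, then d(x,y) ≥ d(x,p) + d(p,y) − 4D for every y ∈ Y; (3) if p and p' are projections of points x and x' onto Y with d(p,p') > D, then d(x,x') ≥ d(x,p) + d(p,p') + d(p',x') − 8D. -/

import Mathlib

/-- `c : [a,b] → X` is a geodesic. -/
def IsGeodesic {X : Type*} [MetricSpace X] (c : ℝ → X) (a b : ℝ) : Prop :=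
  a ≤ b ∧ ∀ s ∈ Set.Icc a b, ∀ t ∈ Set.Icc a b, dist (c s) (c t) = |s - t|

/-- Every two points are joined by a geodesic. -/
def GeodesicSpace (X : Type*) [MetricSpace X] : Prop :=
  ∀ x y : X, ∃ (a b : ℝ) (c : ℝ → X), IsGeodesic c a b ∧ c a = x ∧ c b = y

/-- The set of projections of the point `x` onto `Y`. -/
def projSet {X : Type*} [MetricSpace X] (Y : Set X) (x : X) : Set X :=
  {p | p ∈ Y ∧ dist x p = Metric.infDist x Y}

/-- `Π_Y(Z)`: the set of projections onto `Y` of points of `Z`. -/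
def projOn {X : Type*} [MetricSpace X] (Y Z : Set X) : Set X :=
  ⋃ z ∈ Z, projSet Y z

/-- The `A`-neighborhood `Y^{+A}` of `Y`. -/
def nbhd {X : Type*} [MetricSpace X] (Y : Set X) (A : ℝ) : Set X :=
  {x | Metric.infDist x Y ≤ A}

/-- `Y` is `D`-contracting: the projection onto `Y` of any geodesic staying at
distance at least `D` from `Y` has diameter at most `D`. -/
def IsContracting {X : Type*} [MetricSpace X] (D : ℝ) (Y : Set X) : Prop :=
  ∀ (c : ℝ → X) (a b : ℝ), IsGeodesic c a b →
    (∀ t ∈ Set.Icc a b, D ≤ Metric.infDist (c t) Y) →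
    EMetric.diam (projOn Y (c '' Set.Icc a b)) ≤ ENNReal.ofReal D

section Aux
open Metric Set

variable {X : Type*} [MetricSpace X]


variable {X : Type*} [MetricSpace X]

lemma proj_nonempty [ProperSpace X] {Y : Set X} (hYcl : IsClosed Y) (hYne : Y.Nonempty)
    (x : X) : (projSet Y x).Nonempty := by
  obtain ⟨y, hy, hdy⟩ := hYcl.exists_infDist_eq_dist hYne x
  exact ⟨y, hy, hdy.symm⟩

lemma sub_geodesic {c : ℝ → X} {a b a' b' : ℝ} (h : IsGeodesic c a b)
    (ha : a ≤ a') (hab : a' ≤ b') (hb : b' ≤ b) : IsGeodesic c a' b' :=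
  ⟨hab, fun s hs t ht => h.2 s ⟨ha.trans hs.1, hs.2.trans hb⟩ t ⟨ha.trans ht.1, ht.2.trans hb⟩⟩

lemma rev_geodesic {c : ℝ → X} {a b : ℝ} (h : IsGeodesic c a b) :
    IsGeodesic (fun t => c (a + b - t)) a b := by
  refine ⟨h.1, fun s hs t ht => ?_⟩
  have hs' : a + b - s ∈ Icc a b := ⟨by linarith [hs.2], by linarith [hs.1]⟩
  have ht' : a + b - t ∈ Icc a b := ⟨by linarith [ht.2], by linarith [ht.1]⟩
  have h1 : (a + b - s) - (a + b - t) = t - s := by ring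
  rw [h.2 _ hs' _ ht', h1, abs_sub_comm]

lemma geo_dist {c : ℝ → X} {a b : ℝ} (h : IsGeodesic c a b) {s t : ℝ}
    (hs : s ∈ Icc a b) (ht : t ∈ Icc a b) (hst : s ≤ t) : dist (c s) (c t) = t - s := by
  rw [h.2 s hs t ht, abs_sub_comm, abs_of_nonneg (by linarith)]

lemma entry [ProperSpace X] {D : ℝ} (hD : 0 < D) {Y : Set X} (hYne : Y.Nonempty)
    (hYcl : IsClosed Y) (hY : IsContracting D Y)
    {c : ℝ → X} {a b : ℝ} (hc : IsGeodesic c a b) {p : X} (hp : p ∈ projSet Y (c a))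
    (hex : ∃ t ∈ Icc a b, infDist (c t) Y ≤ D) :
    ∃ t₁ ∈ Icc a b, ∃ q ∈ projSet Y (c t₁),
      infDist (c t₁) Y ≤ D ∧ dist p q ≤ D ∧
      ∀ s ∈ Icc a b, infDist (c s) Y ≤ D → t₁ ≤ s := by
  set f : ℝ → ℝ := fun t => infDist (c t) Y with hf
  have hcont : ContinuousOn f (Icc a b) := by
    have hlip : LipschitzOnWith 1 c (Icc a b) := by
      apply LipschitzOnWith.of_dist_le_mul
      intro s hs t ht
      rw [hc.2 s hs t ht]; simp [Real.dist_eq]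
    exact (continuous_infDist_pt Y).comp_continuousOn hlip.continuousOn
  set S := {t ∈ Icc a b | f t ≤ D} with hS
  have hSne : S.Nonempty := hex
  have hSbdd : BddBelow S := ⟨a, fun t ht => ht.1.1⟩
  have hScl : IsClosed S := by
    have h1 : S = Icc a b ∩ f ⁻¹' (Iic D) := by ext t; simp [hS, Set.mem_sep_iff]
    rw [h1]
    exact hcont.preimage_isClosed_of_isClosed isClosed_Icc isClosed_Iic
  set t₁ := sInf S with ht₁
  have ht₁S : t₁ ∈ S := hScl.csInf_mem hSne hSbdd
  have hmin : ∀ s ∈ Icc a b, f s ≤ D → t₁ ≤ s := fun s hs hfs => csInf_le hSbdd ⟨hs, hfs⟩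
  rcases eq_or_lt_of_le ht₁S.1.1 with heq | hlt
  · refine ⟨t₁, ht₁S.1, p, by rw [← heq]; exact hp, ht₁S.2, by simp [hD.le], hmin⟩
  · have hIcc : Icc a t₁ ⊆ Icc a b := Icc_subset_Icc le_rfl ht₁S.1.2
    have hge : ∀ s ∈ Icc a t₁, D ≤ f s := by
      intro s hs
      rcases eq_or_lt_of_le hs.2 with h | h
      · -- s = t₁: continuity
        have hstrict : ∀ u ∈ Ico a t₁, D ≤ f u := by
          intro u hu
          by_contra hcon
          push_neg at hcon
          exact absurd (hmin u ⟨hu.1, hu.2.le.trans ht₁S.1.2⟩ hcon.le) (not_le.2 hu.2)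
        have hct : Filter.Tendsto f (nhdsWithin t₁ (Ico a t₁)) (nhds (f t₁)) :=
          ((hcont t₁ ht₁S.1).mono (Ico_subset_Icc_self.trans hIcc))
        rw [nhdsWithin_Ico_eq_nhdsLT hlt] at hct
        have : D ≤ f t₁ := by
          refine ge_of_tendsto hct ?_
          rw [← nhdsWithin_Ico_eq_nhdsLT hlt]
          exact Filter.eventually_of_mem self_mem_nhdsWithin hstrict
        rwa [h]
      · by_contra hcon
        push_neg at hcon
        exact absurd (hmin s ⟨hs.1, hs.2.trans ht₁S.1.2⟩ hcon.le) (not_le.2 h)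
    have hdiam := hY c a t₁ (sub_geodesic hc le_rfl hlt.le ht₁S.1.2) hge
    obtain ⟨q, hq⟩ := proj_nonempty hYcl hYne (c t₁)
    have hpq : dist p q ≤ D := by
      have h1 : p ∈ projOn Y (c '' Icc a t₁) :=
        Set.mem_biUnion (mem_image_of_mem c (left_mem_Icc.2 hlt.le)) hp
      have h2 : q ∈ projOn Y (c '' Icc a t₁) :=
        Set.mem_biUnion (mem_image_of_mem c (right_mem_Icc.2 hlt.le)) hq
      have h3 := (EMetric.edist_le_diam_of_mem h1 h2).trans hdiam
      rw [edist_dist] at h3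
      exact (ENNReal.ofReal_le_ofReal_iff hD.le).1 h3
    exact ⟨t₁, ht₁S.1, q, hq, ht₁S.2, hpq, hmin⟩

lemma key2 [ProperSpace X] (hX : GeodesicSpace X)
    {D : ℝ} (hD : 0 < D) {Y : Set X}
    (hYne : Y.Nonempty) (hYcl : IsClosed Y) (hY : IsContracting D Y)
    {x p : X} (hp : p ∈ projSet Y x) {y : X} (hy : y ∈ Y) :
    dist x p + dist p y - 4 * D ≤ dist x y := by
  obtain ⟨a, b, c, hc, hca, hcb⟩ := hX x y
  have hp' : p ∈ projSet Y (c a) := by rwa [hca]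
  have hex : ∃ t ∈ Icc a b, infDist (c t) Y ≤ D := by
    refine ⟨b, right_mem_Icc.2 hc.1, ?_⟩
    rw [hcb, infDist_zero_of_mem hy]; exact hD.le
  obtain ⟨t₁, ht₁, q, hq, hinf, hpq, -⟩ := entry hD hYne hYcl hY hc hp' hex
  have hqt : dist (c t₁) q ≤ D := by rw [hq.2]; exact hinf
  have hxq : dist x p ≤ dist x q := hp.2 ▸ infDist_le_dist_of_mem hq.1
  have hsplit : dist x y = dist x (c t₁) + dist (c t₁) y := by
    rw [← hca, ← hcb, geo_dist hc (left_mem_Icc.2 hc.1) (right_mem_Icc.2 hc.1) hc.1,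
      geo_dist hc (left_mem_Icc.2 hc.1) ht₁ ht₁.1, geo_dist hc ht₁ (right_mem_Icc.2 hc.1) ht₁.2]
    ring
  have t1 : dist x q ≤ dist x (c t₁) + dist (c t₁) q := dist_triangle _ _ _
  have t2 : dist q y ≤ dist q (c t₁) + dist (c t₁) y := dist_triangle _ _ _
  have t3 : dist p y ≤ dist p q + dist q y := dist_triangle _ _ _
  have hcomm : dist q (c t₁) = dist (c t₁) q := dist_comm _ _
  linarith

lemma key [ProperSpace X] (hX : GeodesicSpace X)
    {D : ℝ} (hD : 0 < D) {Y : Set X}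
    (hYne : Y.Nonempty) (hYcl : IsClosed Y) (hY : IsContracting D Y)
    {x x' p p' : X} (hp : p ∈ projSet Y x) (hp' : p' ∈ projSet Y x') :
    (dist p p' ≤ dist x x' + 4 * D) ∧
    (dist x p + dist p p' + dist p' x' - 8 * D ≤ dist x x' ∨ dist p p' ≤ D) := by
  obtain ⟨a, b, c, hc, hca, hcb⟩ := hX x x'
  have hpa : p ∈ projSet Y (c a) := by rwa [hca]
  by_cases hex : ∃ t ∈ Icc a b, infDist (c t) Y ≤ D
  · -- geodesic comes D-close to Y
    obtain ⟨t₁, ht₁, q₁, hq₁, hinf₁, hpq₁, hmin₁⟩ := entry hD hYne hYcl hY hc hpa hex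
    set c' : ℝ → X := fun t => c (a + b - t) with hc'def
    have hc' : IsGeodesic c' a b := rev_geodesic hc
    have hpa' : p' ∈ projSet Y (c' a) := by
      show p' ∈ projSet Y (c (a + b - a))
      have : a + b - a = b := by ring
      rw [this, hcb]; exact hp'
    have hex' : ∃ t ∈ Icc a b, infDist (c' t) Y ≤ D := by
      obtain ⟨t, ht, hft⟩ := hex
      refine ⟨a + b - t, ⟨by linarith [ht.2], by linarith [ht.1]⟩, ?_⟩
      show infDist (c (a + b - (a + b - t))) Y ≤ D
      have h1 : a + b - (a + b - t) = t := by ring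
      rwa [h1]
    obtain ⟨t₂', ht₂', q₂, hq₂, hinf₂, hpq₂, hmin₂⟩ := entry hD hYne hYcl hY hc' hpa' hex'
    set t₂ : ℝ := a + b - t₂' with ht₂def
    have ht₂ : t₂ ∈ Icc a b := ⟨by linarith [ht₂'.2], by linarith [ht₂'.1]⟩
    have hc't₂ : c' t₂' = c t₂ := rfl
    rw [hc't₂] at hq₂ hinf₂
    -- t₁ ≤ t₂
    have ht₁₂ : t₁ ≤ t₂ := by
      have := hmin₂ (a + b - t₁) ⟨by linarith [ht₁.2], by linarith [ht₁.1]⟩ (by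
        show infDist (c (a + b - (a + b - t₁))) Y ≤ D
        have h1 : a + b - (a + b - t₁) = t₁ := by ring
        rwa [h1])
      linarith
    -- distances along the geodesic
    have d1 : dist x (c t₁) = t₁ - a := by
      rw [← hca]; exact geo_dist hc (left_mem_Icc.2 hc.1) ht₁ ht₁.1
    have d2 : dist (c t₁) (c t₂) = t₂ - t₁ := geo_dist hc ht₁ ht₂ ht₁₂
    have d3 : dist (c t₂) x' = b - t₂ := by
      rw [← hcb]; exact geo_dist hc ht₂ (right_mem_Icc.2 hc.1) ht₂.2
    have d4 : dist x x' = b - a := by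
      rw [← hca, ← hcb]; exact geo_dist hc (left_mem_Icc.2 hc.1) (right_mem_Icc.2 hc.1) hc.1
    have hq₁t : dist (c t₁) q₁ ≤ D := by rw [hq₁.2]; exact hinf₁
    have hq₂t : dist (c t₂) q₂ ≤ D := by rw [hq₂.2]; exact hinf₂
    have hxq₁ : dist x p ≤ dist x q₁ := hp.2 ▸ infDist_le_dist_of_mem hq₁.1
    have hxq₂ : dist x' p' ≤ dist x' q₂ := hp'.2 ▸ infDist_le_dist_of_mem hq₂.1
    -- triangle inequalities
    have t1 : dist x q₁ ≤ dist x (c t₁) + dist (c t₁) q₁ := dist_triangle _ _ _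
    have t2 : dist x' q₂ ≤ dist x' (c t₂) + dist (c t₂) q₂ := dist_triangle _ _ _
    have t3 : dist p p' ≤ dist p q₁ + dist q₁ p' := dist_triangle _ _ _
    have t4 : dist q₁ p' ≤ dist q₁ q₂ + dist q₂ p' := dist_triangle _ _ _
    have t5 : dist q₁ q₂ ≤ dist q₁ (c t₁) + dist (c t₁) q₂ := dist_triangle _ _ _
    have t6 : dist (c t₁) q₂ ≤ dist (c t₁) (c t₂) + dist (c t₂) q₂ := dist_triangle _ _ _
    have e1 : dist x' (c t₂) = dist (c t₂) x' := dist_comm _ _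
    have e2 : dist q₁ (c t₁) = dist (c t₁) q₁ := dist_comm _ _
    have e3 : dist q₂ p' = dist p' q₂ := dist_comm _ _
    have e4 : dist p' x' = dist x' p' := dist_comm _ _
    constructor
    · linarith [ht₁.1, ht₁.2, ht₂.1, ht₂.2]
    · left
      -- lower bound on t₂ - t₁ via dist q₁ q₂
      have t7 : dist q₁ q₂ ≤ dist q₁ (c t₁) + (dist (c t₁) (c t₂) + dist (c t₂) q₂) :=
        t5.trans (by linarith)
      have t8 : dist p p' ≤ dist p q₁ + (dist q₁ q₂ + dist q₂ p') := t3.trans (by linarith)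
      linarith [ht₁.1, ht₁.2, ht₂.1, ht₂.2]
  · -- geodesic stays D-far from Y
    push_neg at hex
    have hge : ∀ t ∈ Icc a b, D ≤ infDist (c t) Y := fun t ht => (hex t ht).le
    have hdiam := hY c a b hc hge
    have h1 : p ∈ projOn Y (c '' Icc a b) :=
      Set.mem_biUnion (mem_image_of_mem c (left_mem_Icc.2 hc.1)) hpa
    have h2 : p' ∈ projOn Y (c '' Icc a b) := by
      refine Set.mem_biUnion (mem_image_of_mem c (right_mem_Icc.2 hc.1)) ?_
      rwa [hcb]
    have h3 := (EMetric.edist_le_diam_of_mem h1 h2).trans hdiam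
    rw [edist_dist] at h3
    have hpp' : dist p p' ≤ D := (ENNReal.ofReal_le_ofReal_iff hD.le).1 h3
    exact ⟨by linarith [dist_nonneg (x := x) (y := x')], Or.inr hpp'⟩

end Aux

theorem stmt11 {X : Type*} [MetricSpace X] [ProperSpace X] (hX : GeodesicSpace X)
    (D : ℝ) (hD : 0 < D) (Y : Set X) (hYne : Y.Nonempty) (hYcl : IsClosed Y)
    (hY : IsContracting D Y) :
    (∀ Z : Set X, EMetric.diam (projOn Y Z) ≤ EMetric.diam Z + ENNReal.ofReal (4 * D)) ∧
    (∀ (x p : X), p ∈ projSet Y x → ∀ y ∈ Y,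
      dist x p + dist p y - 4 * D ≤ dist x y) ∧
    (∀ (x x' p p' : X), p ∈ projSet Y x → p' ∈ projSet Y x' → D < dist p p' →
      dist x p + dist p p' + dist p' x' - 8 * D ≤ dist x x') := by
  refine ⟨?_, ?_, ?_⟩
  · intro Z
    apply EMetric.diam_le
    intro q hq q' hq'
    obtain ⟨z, hz, hqz⟩ := Set.mem_iUnion₂.1 hq
    obtain ⟨z', hz', hqz'⟩ := Set.mem_iUnion₂.1 hq'
    have hkey := (key hX hD hYne hYcl hY hqz hqz').1
    rw [edist_dist]
    calc ENNReal.ofReal (dist q q')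
        ≤ ENNReal.ofReal (dist z z' + 4 * D) := ENNReal.ofReal_le_ofReal hkey
      _ ≤ ENNReal.ofReal (dist z z') + ENNReal.ofReal (4 * D) := ENNReal.ofReal_add_le
      _ = edist z z' + ENNReal.ofReal (4 * D) := by rw [edist_dist]
      _ ≤ EMetric.diam Z + ENNReal.ofReal (4 * D) :=
          add_le_add_left (EMetric.edist_le_diam_of_mem hz hz') _
  · intro x p hp y hy
    exact key2 hX hD hYne hYcl hY hp hy
  · intro x x' p p' hp hp' hdpp'
    rcases (key hX hD hYne hYcl hY hp hp').2 with h | h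
    · exact h
    · linarith
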